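/- arXiv:1805.08956 — 3 statements merged into one kernel-verified Lean document; each statement's English description precedes it below -/
import Mathlib

section
/- Let Ψ:[n]→[k] be surjective with membership matrix Z ∈ {0,1}^{n×k}, cluster sizes n_j = |Ψ⁻¹(j)| and n_min = min_j n_j, and let B ∈ R^{k×k}. Then the smallest nonzero singular value of P = Z·B·Zᵀ satisfies σ_min(P) = σ_min(Δ·B·Δᵀ) ≥ n_min·σ_min(B), where Δ = diag(√n₁, …, √n_k) and σ_min(B) is the smallest singular value of B. -/
open MeasureTheory ProbabilityTheory Finset Matrix Filter

noncomputable section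

namespace HSBM

/-- The set of (hyper)edges: all `d`-element subsets of `[n]`. -/
def edgeSet (n d : ℕ) : Finset (Finset (Fin n)) :=
  (Finset.univ : Finset (Fin n)).powersetCard d

/-- An edge is homogeneous w.r.t. a partition `Ψ` if all its nodes lie in one group. -/
def homogeneous {n k : ℕ} (Ψ : Fin n → Fin k) (e : Finset (Fin n)) : Prop :=
  ∀ i ∈ e, ∀ j ∈ e, Ψ i = Ψ j

/-- Similarity matrix built from the weights of the edges in `E₁` only. -/
def simMatrixOn {n : ℕ} (d : ℕ) (E₁ : Finset (Finset (Fin n))) (W : Finset (Fin n) → ℝ) :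
    Matrix (Fin n) (Fin n) ℝ := fun i j =>
  if i = j then 0
  else ∑ e ∈ edgeSet n d ∩ E₁, if ({i, j} : Finset (Fin n)) ⊆ e then W e else 0

/-- Similarity matrix `A` of a weighted hypergraph. -/
def simMatrix {n : ℕ} (d : ℕ) (W : Finset (Fin n) → ℝ) : Matrix (Fin n) (Fin n) ℝ :=
  simMatrixOn d (edgeSet n d) W

/-- Processed similarity matrix `A⁰`: rows (and columns) whose sum exceeds
`c_thr · (1/n) · Σ_{i,j} A_{ij}` are zeroed out. -/
def processed {n : ℕ} (cthr : ℝ) (A : Matrix (Fin n) (Fin n) ℝ) : Matrix (Fin n) (Fin n) ℝ :=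
  fun i j =>
    if cthr * ((1 : ℝ) / n) * ∑ a, ∑ b, A a b < ∑ l, A i l ∨
        cthr * ((1 : ℝ) / n) * ∑ a, ∑ b, A a b < ∑ l, A j l then 0
    else A i j

/-- `U` is an `n × k` matrix whose columns are orthonormal eigenvectors of `M`
associated with its `k` largest eigenvalues. -/
def IsTopEigen {n k : ℕ} (M : Matrix (Fin n) (Fin n) ℝ) (U : Matrix (Fin n) (Fin k) ℝ) : Prop :=
  ∃ (v : Fin n → Fin n → ℝ) (lam : Fin n → ℝ),
    (∀ a b : Fin n, v a ⬝ᵥ v b = if a = b then (1 : ℝ) else 0) ∧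
    (∀ a : Fin n, M.mulVec (v a) = lam a • v a) ∧
    (∀ a b : Fin n, a ≤ b → lam b ≤ lam a) ∧
    (∀ (j : Fin k) (hj : (j : ℕ) < n) (i : Fin n), U i j = v ⟨j, hj⟩ i)

def clusterOf {n k : ℕ} (Φ : Fin n → Fin k) (j : Fin k) : Finset (Fin n) :=
  Finset.univ.filter fun i => Φ i = j

/-- `k`-means cost of a partition `Φ` of the rows of `U`. -/
def kmCost {n k : ℕ} (U : Matrix (Fin n) (Fin k) ℝ) (Φ : Fin n → Fin k) : ℝ :=
  ∑ j : Fin k, ∑ i ∈ clusterOf Φ j,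
    ∑ m : Fin k,
      (U i m - (1 / ((clusterOf Φ j).card : ℝ)) * ∑ l ∈ clusterOf Φ j, U l m) ^ 2

/-- `Φ` is a `(1+ε)`-approximate `k`-means solution for the rows of `U`. -/
def IsApproxKMeans {n k : ℕ} (ε : ℝ) (U : Matrix (Fin n) (Fin k) ℝ) (Φ : Fin n → Fin k) : Prop :=
  ∀ Φ' : Fin n → Fin k, kmCost U Φ ≤ (1 + ε) * kmCost U Φ'

/-- `Φ` is an output of HSC run on the edges in `E₁`. -/
def IsHSCOutputOn {n k : ℕ} (d : ℕ) (cthr ε : ℝ) (E₁ : Finset (Finset (Fin n)))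
    (W : Finset (Fin n) → ℝ) (Φ : Fin n → Fin k) : Prop :=
  ∃ U : Matrix (Fin n) (Fin k) ℝ,
    IsTopEigen (processed cthr (simMatrixOn d E₁ W)) U ∧ IsApproxKMeans ε U Φ

/-- `Φ` is an output of HSC. -/
def IsHSCOutput {n k : ℕ} (d : ℕ) (cthr ε : ℝ) (W : Finset (Fin n) → ℝ)
    (Φ : Fin n → Fin k) : Prop :=
  IsHSCOutputOn d cthr ε (edgeSet n d) W Φ

/-- `E^{(i)}(j)`: the edges of `E₂` containing `i` whose other nodes all lie in `Φ₀⁻¹(j)`. -/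
def refineEdges {n k : ℕ} (E₂ : Finset (Finset (Fin n))) (Φ₀ : Fin n → Fin k)
    (i : Fin n) (j : Fin k) : Finset (Finset (Fin n)) :=
  E₂.filter fun e => i ∈ e ∧ ∀ l ∈ e, l ≠ i → Φ₀ l = j

/-- Average weight over `E^{(i)}(j)`. -/
def avgWeight {n k : ℕ} (W : Finset (Fin n) → ℝ) (E₂ : Finset (Finset (Fin n)))
    (Φ₀ : Fin n → Fin k) (i : Fin n) (j : Fin k) : ℝ :=
  (∑ e ∈ refineEdges E₂ Φ₀ i j, W e) / ((refineEdges E₂ Φ₀ i j).card : ℝ)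

/-- `Φ` is an output of HSCLR given realized weights `W` and split indicators `ξ`
(`ξ e = 1` iff `e ∈ E₁`). -/
def IsHSCLROutput {n k : ℕ} (d : ℕ) (cthr ε : ℝ) (W : Finset (Fin n) → ℝ)
    (ξ : Finset (Fin n) → ℝ) (Φ : Fin n → Fin k) : Prop :=
  ∃ Φ₀ : Fin n → Fin k,
    IsHSCOutputOn d cthr ε ((edgeSet n d).filter fun e => ξ e = 1) W Φ₀ ∧
    ∀ (i : Fin n) (j : Fin k),
      avgWeight W ((edgeSet n d).filter fun e => ξ e ≠ 1) Φ₀ i j ≤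
        avgWeight W ((edgeSet n d).filter fun e => ξ e ≠ 1) Φ₀ i (Φ i)

/-- Error fraction `err(Φ)`. -/
def errFrac {n k : ℕ} (Ψ Φ : Fin n → Fin k) : ℝ :=
  (⨅ π : Equiv.Perm (Fin k),
    ((Finset.univ.filter fun i => Ψ i ≠ π (Φ i)).card : ℝ)) / n

/-- Size of the `j`-th cluster. -/
def csize {n k : ℕ} (Ψ : Fin n → Fin k) (j : Fin k) : ℕ :=
  (Finset.univ.filter fun i => Ψ i = j).card

def nmin {n k : ℕ} (Ψ : Fin n → Fin k) : ℕ := sInf (Set.range fun j => csize Ψ j)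

def nmax {n k : ℕ} (Ψ : Fin n → Fin k) : ℕ := sSup (Set.range fun j => csize Ψ j)

/-- Worst-cluster error fraction `errr(Φ)`. -/
def errrFrac {n k : ℕ} (Ψ Φ : Fin n → Fin k) : ℝ :=
  ⨅ π : Equiv.Perm (Fin k), ⨆ j : Fin k,
    ((Finset.univ.filter fun i => Ψ i = j ∧ π (Φ i) ≠ j).card : ℝ) / (csize Ψ j : ℝ)

/-- Membership matrix `Z` of a partition `Ψ`. -/
def memMatrix {n k : ℕ} (Ψ : Fin n → Fin k) : Matrix (Fin n) (Fin k) ℝ :=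
  fun i j => if Ψ i = j then 1 else 0

/-- Spectral norm of a real square matrix. -/
def specNorm {n : ℕ} (M : Matrix (Fin n) (Fin n) ℝ) : ℝ :=
  ‖Matrix.toEuclideanCLM (𝕜 := ℝ) M‖

/-- Smallest nonzero singular value of a real square matrix. -/
def sigmaNZmin {m : ℕ} (M : Matrix (Fin m) (Fin m) ℝ) : ℝ :=
  sInf {r : ℝ | r ≠ 0 ∧ ∃ i : Fin m,
    r = Real.sqrt ((show (Mᵀ * M).IsHermitian by
      simpa using Matrix.isHermitian_conjTranspose_mul_self M).eigenvalues i)}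

/-- Smallest singular value of a real square matrix. -/
def sigmaMin {m : ℕ} (M : Matrix (Fin m) (Fin m) ℝ) : ℝ :=
  sInf {r : ℝ | ∃ i : Fin m,
    r = Real.sqrt ((show (Mᵀ * M).IsHermitian by
      simpa using Matrix.isHermitian_conjTranspose_mul_self M).eigenvalues i)}

/-- `den_M(S,T) = Σ_{i∈S} Σ_{j∈T} M_{ij}`. -/
def den {n : ℕ} (M : Matrix (Fin n) (Fin n) ℝ) (S T : Finset (Fin n)) : ℝ :=
  ∑ i ∈ S, ∑ j ∈ T, M i j

/-- `f_e(X) = 1` if all coordinates of `X` indexed by `e` agree, and `0` otherwise. -/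
def fval {nn : ℕ} (X : Fin nn → Bool) (e : Finset (Fin nn)) : ℝ :=
  if ∀ i ∈ e, ∀ j ∈ e, X i = X j then 1 else 0

/-- An instance of the weighted stochastic block model on a measurable space `Ω`. -/
structure WSBM (n d k : ℕ) (p q : ℝ) (Ω : Type*) [MeasurableSpace Ω] where
  μ : Measure Ω
  prob : IsProbabilityMeasure μ
  Ψ : Fin n → Fin k
  surj : Function.Surjective Ψ
  α : ℝ
  α_pos : 0 < α
  α_le_one : α ≤ 1
  W : Finset (Fin n) → Ω → ℝ
  W_meas : ∀ e, Measurable (W e)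
  W_range : ∀ e, ∀ᵐ ω ∂μ, W e ω ∈ Set.Icc (0 : ℝ) 1
  W_indep : iIndepFun W μ
  W_homo : ∀ e ∈ edgeSet n d, homogeneous Ψ e → ∫ ω, W e ω ∂μ = p * α
  W_hetero : ∀ e ∈ edgeSet n d, ¬ homogeneous Ψ e → ∫ ω, W e ω ∂μ = q * α

/- ===== Auxiliary lemmas for statement6 ===== -/
section Statement6Aux

variable {m : ℕ}

lemma Matrix.isHermitian_transpose_mul_self {a b : ℕ} (M : Matrix (Fin a) (Fin b) ℝ) :
    (Mᵀ * M).IsHermitian := by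
  simpa using _root_.Matrix.isHermitian_conjTranspose_mul_self M

lemma real_inner_eq_dot' (x y : EuclideanSpace ℝ (Fin m)) : (inner ℝ x y : ℝ) = ⇑x ⬝ᵥ ⇑y := by
  simp [PiLp.inner_apply, dotProduct, RCLike.inner_apply, conj_trivial, mul_comm]

lemma parseval' {C : Matrix (Fin m) (Fin m) ℝ} (hC : C.IsHermitian) (a b : Fin m → ℝ) :
    a ⬝ᵥ b = ∑ i, (⇑(hC.eigenvectorBasis i) ⬝ᵥ a) * (⇑(hC.eigenvectorBasis i) ⬝ᵥ b) := by
  have h := hC.eigenvectorBasis.sum_inner_mul_inner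
    ((WithLp.equiv 2 (Fin m → ℝ)).symm a) ((WithLp.equiv 2 (Fin m → ℝ)).symm b)
  simp only [real_inner_eq_dot', WithLp.equiv_symm_apply, WithLp.ofLp_toLp] at h
  rw [← h]
  refine Finset.sum_congr rfl fun i _ => ?_
  rw [dotProduct_comm]

lemma real_conjTranspose' {a b : ℕ} (M : Matrix (Fin a) (Fin b) ℝ) : Mᴴ = Mᵀ := by
  ext i j; simp [Matrix.conjTranspose_apply]

lemma dot_mulVec_self' {a b : ℕ} (A : Matrix (Fin a) (Fin b) ℝ) (x : Fin b → ℝ) :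
    (A *ᵥ x) ⬝ᵥ (A *ᵥ x) = x ⬝ᵥ ((Aᴴ * A) *ᵥ x) := by
  rw [real_conjTranspose', ← Matrix.mulVec_mulVec, Matrix.dotProduct_mulVec x,
    Matrix.vecMul_transpose]

lemma herm_transpose' {M : Matrix (Fin m) (Fin m) ℝ} (hM : M.IsHermitian) : Mᵀ = M := by
  ext i j
  simpa [Matrix.conjTranspose_apply] using congrFun (congrFun hM i) j

lemma eig_nonneg' {a : ℕ} (B : Matrix (Fin a) (Fin m) ℝ) (i : Fin m) :
    0 ≤ (Matrix.isHermitian_transpose_mul_self B).eigenvalues i :=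
  (Matrix.posSemidef_conjTranspose_mul_self B).eigenvalues_nonneg i

lemma basis_dot_self' {M : Matrix (Fin m) (Fin m) ℝ} (hM : M.IsHermitian) (i : Fin m) :
    ⇑(hM.eigenvectorBasis i) ⬝ᵥ ⇑(hM.eigenvectorBasis i) = 1 := by
  have h := hM.eigenvectorBasis.orthonormal
  rw [orthonormal_iff_ite] at h
  have h2 := h i i
  simp only [if_true, eq_self_iff_true] at h2
  rw [← h2, real_inner_eq_dot']

lemma basis_ne_zero' {M : Matrix (Fin m) (Fin m) ℝ} (hM : M.IsHermitian) (i : Fin m) :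
    (⇑(hM.eigenvectorBasis i) : Fin m → ℝ) ≠ 0 := by
  intro h0
  have h1 := basis_dot_self' hM i
  rw [h0] at h1
  simp at h1

lemma basis_dot_mulVec' {C : Matrix (Fin m) (Fin m) ℝ} (hC : C.IsHermitian) (i : Fin m)
    (y : Fin m → ℝ) :
    ⇑(hC.eigenvectorBasis i) ⬝ᵥ (C *ᵥ y) =
      hC.eigenvalues i * (⇑(hC.eigenvectorBasis i) ⬝ᵥ y) := by
  rw [Matrix.dotProduct_mulVec]
  have h1 : ⇑(hC.eigenvectorBasis i) ᵥ* C = hC.eigenvalues i • ⇑(hC.eigenvectorBasis i) := by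
    have h2 := Matrix.vecMul_transpose C ⇑(hC.eigenvectorBasis i)
    rw [herm_transpose' hC] at h2
    rw [h2, hC.mulVec_eigenvectorBasis]
  rw [h1, smul_dotProduct, smul_eq_mul]

lemma exists_eigen' {M : Matrix (Fin m) (Fin m) ℝ} (hM : M.IsHermitian) {v : Fin m → ℝ}
    (hv : v ≠ 0) {μ : ℝ} (h : M *ᵥ v = μ • v) : ∃ i, hM.eigenvalues i = μ := by
  by_contra hc
  push_neg at hc
  have hz : ∀ i, ⇑(hM.eigenvectorBasis i) ⬝ᵥ v = 0 := by
    intro i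
    have h1 : ⇑(hM.eigenvectorBasis i) ⬝ᵥ (M *ᵥ v) =
        hM.eigenvalues i * (⇑(hM.eigenvectorBasis i) ⬝ᵥ v) := basis_dot_mulVec' hM i v
    rw [h, dotProduct_smul, smul_eq_mul] at h1
    have h2 : (hM.eigenvalues i - μ) * (⇑(hM.eigenvectorBasis i) ⬝ᵥ v) = 0 := by
      rw [sub_mul]; linarith
    rcases mul_eq_zero.mp h2 with h3 | h3
    · exact absurd (by linarith : hM.eigenvalues i = μ) (hc i)
    · exact h3
  have hvv : v ⬝ᵥ v = 0 := by
    rw [parseval' hM v v]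
    simp [hz]
  exact hv (dotProduct_self_eq_zero.mp hvv)

lemma sv_mem_iff' (M : Matrix (Fin m) (Fin m) ℝ) (r : ℝ) :
    (r ≠ 0 ∧ ∃ i, r = Real.sqrt ((Matrix.isHermitian_transpose_mul_self M).eigenvalues i)) ↔
    (0 < r ∧ ∃ v : Fin m → ℝ, v ≠ 0 ∧ (Mᴴ * M) *ᵥ v = (r * r) • v) := by
  constructor
  · rintro ⟨hr0, i, hi⟩
    have hnn := eig_nonneg' M i
    have hrpos : 0 < r := lt_of_le_of_ne (hi ▸ Real.sqrt_nonneg _) (Ne.symm hr0)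
    refine ⟨hrpos, ⇑((Matrix.isHermitian_transpose_mul_self M).eigenvectorBasis i),
      basis_ne_zero' _ i, ?_⟩
    rw [real_conjTranspose' M, (Matrix.isHermitian_transpose_mul_self M).mulVec_eigenvectorBasis]
    congr 1
    rw [hi, Real.mul_self_sqrt hnn]
  · rintro ⟨hr, v, hv, hmv⟩
    obtain ⟨i, hi⟩ := exists_eigen' (Matrix.isHermitian_transpose_mul_self M) hv hmv
    exact ⟨ne_of_gt hr, i, by rw [hi, Real.sqrt_mul_self hr.le]⟩

lemma sigmaNZmin_nonneg' (M : Matrix (Fin m) (Fin m) ℝ) : 0 ≤ sigmaNZmin M := by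
  apply Real.sInf_nonneg
  rintro x ⟨hx, i, rfl⟩
  exact Real.sqrt_nonneg _

lemma sigmaNZmin_bddBelow' (M : Matrix (Fin m) (Fin m) ℝ) :
    BddBelow {r : ℝ | r ≠ 0 ∧ ∃ i : Fin m,
      r = Real.sqrt ((Matrix.isHermitian_transpose_mul_self M).eigenvalues i)} := by
  refine ⟨0, ?_⟩
  rintro x ⟨hx, i, rfl⟩
  exact Real.sqrt_nonneg _

lemma ZtZ' {n k : ℕ} (Ψ : Fin n → Fin k) :
    (memMatrix Ψ)ᵀ * memMatrix Ψ = Matrix.diagonal (fun j => (csize Ψ j : ℝ)) := by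
  ext j l
  simp only [Matrix.mul_apply, Matrix.transpose_apply, memMatrix]
  by_cases hjl : j = l
  · subst hjl
    rw [Matrix.diagonal_apply_eq]
    rw [csize]
    rw [← Finset.sum_boole]
    refine Finset.sum_congr rfl fun i _ => ?_
    by_cases h : Ψ i = j <;> simp [h]
  · rw [Matrix.diagonal_apply_ne _ hjl]
    refine Finset.sum_eq_zero fun i _ => ?_
    by_cases h1 : Ψ i = j
    · have h2 : Ψ i ≠ l := fun h2 => hjl (h1 ▸ h2 ▸ rfl)
      simp [h1, h2, hjl]
    · simp [h1]

lemma csize_pos' {n k : ℕ} (Ψ : Fin n → Fin k) (hΨ : Function.Surjective Ψ) (j : Fin k) :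
    0 < csize Ψ j := by
  obtain ⟨i, hi⟩ := hΨ j
  exact Finset.card_pos.mpr ⟨i, by simp [csize, hi]⟩

end Statement6Aux
/-- the smallest nonzero singular value of `P = Z B Zᵀ`. -/
theorem statement6 (n k : ℕ) (Ψ : Fin n → Fin k) (hΨ : Function.Surjective Ψ)
    (B : Matrix (Fin k) (Fin k) ℝ) :
    sigmaNZmin (memMatrix Ψ * B * (memMatrix Ψ)ᵀ) =
        sigmaNZmin (Matrix.diagonal (fun j => Real.sqrt (csize Ψ j : ℝ)) * B *
          (Matrix.diagonal fun j => Real.sqrt (csize Ψ j : ℝ))ᵀ) ∧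
      (nmin Ψ : ℝ) * sigmaNZmin B ≤ sigmaNZmin (memMatrix Ψ * B * (memMatrix Ψ)ᵀ) := by
  classical
  rw [Matrix.diagonal_transpose]
  set Z : Matrix (Fin n) (Fin k) ℝ := memMatrix Ψ with hZdef
  set g : Fin k → ℝ := fun j => Real.sqrt ((csize Ψ j : ℝ)) with hgdef
  have hnpos : ∀ j, (0:ℝ) < ((csize Ψ j : ℕ) : ℝ) := fun j => by
    exact_mod_cast csize_pos' Ψ hΨ j
  have hgpos : ∀ j, 0 < g j := fun j => Real.sqrt_pos.mpr (hnpos j)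
  have hgg : ∀ j, g j * g j = ((csize Ψ j : ℕ) : ℝ) := fun j =>
    Real.mul_self_sqrt (hnpos j).le
  set Dm : Matrix (Fin k) (Fin k) ℝ := Matrix.diagonal (fun j => ((csize Ψ j : ℕ) : ℝ))
    with hDmdef
  set Δ' : Matrix (Fin k) (Fin k) ℝ := Matrix.diagonal (fun j => (g j)⁻¹) with hΔ'def
  set Δ : Matrix (Fin k) (Fin k) ℝ := Matrix.diagonal g with hΔdef
  set P : Matrix (Fin n) (Fin n) ℝ := Z * B * Zᵀ with hPdef
  set Q : Matrix (Fin k) (Fin k) ℝ := Δ * B * Δ with hQdef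
  have hΔT : Δᵀ = Δ := by rw [hΔdef, Matrix.diagonal_transpose]
  have hZZ : Zᵀ * Z = Dm := ZtZ' Ψ
  have hΔΔ : Δ * Δ = Dm := by
    rw [hΔdef, hDmdef, Matrix.diagonal_mul_diagonal]
    exact congrArg Matrix.diagonal (funext hgg)
  have hΔΔ' : Δ * Δ' = 1 := by
    rw [hΔdef, hΔ'def, Matrix.diagonal_mul_diagonal, ← Matrix.diagonal_one]
    exact congrArg Matrix.diagonal (funext fun j => mul_inv_cancel₀ (hgpos j).ne')
  have hΔ'Δ : Δ' * Δ = 1 := by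
    rw [hΔdef, hΔ'def, Matrix.diagonal_mul_diagonal, ← Matrix.diagonal_one]
    exact congrArg Matrix.diagonal (funext fun j => inv_mul_cancel₀ (hgpos j).ne')
  have hDΔ' : Dm * Δ' = Δ := by
    rw [hΔdef, hΔ'def, hDmdef, Matrix.diagonal_mul_diagonal]
    exact congrArg Matrix.diagonal (funext fun j => by
      rw [← hgg j, mul_assoc, mul_inv_cancel₀ (hgpos j).ne', mul_one])
  have hΔ'D : Δ' * Dm = Δ := by
    rw [hΔdef, hΔ'def, hDmdef, Matrix.diagonal_mul_diagonal]
    exact congrArg Matrix.diagonal (funext fun j => by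
      rw [← hgg j, ← mul_assoc, inv_mul_cancel₀ (hgpos j).ne', one_mul])
  have hZZX : ∀ (p : Type) (X : Matrix (Fin k) p ℝ), Zᵀ * (Z * X) = Dm * X := fun p X => by
    rw [← Matrix.mul_assoc, hZZ]
  have hΔΔX : ∀ (p : Type) (X : Matrix (Fin k) p ℝ), Δ * (Δ * X) = Dm * X := fun p X => by
    rw [← Matrix.mul_assoc, hΔΔ]
  have hΔΔ'X : ∀ (p : Type) (X : Matrix (Fin k) p ℝ), Δ * (Δ' * X) = X := fun p X => by
    rw [← Matrix.mul_assoc, hΔΔ', Matrix.one_mul]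
  have hΔ'ΔX : ∀ (p : Type) (X : Matrix (Fin k) p ℝ), Δ' * (Δ * X) = X := fun p X => by
    rw [← Matrix.mul_assoc, hΔ'Δ, Matrix.one_mul]
  have hΔ'DX : ∀ (p : Type) (X : Matrix (Fin k) p ℝ), Δ' * (Dm * X) = Δ * X := fun p X => by
    rw [← Matrix.mul_assoc, hΔ'D]
  have hQT : Qᵀ = Δ * (Bᵀ * Δ) := by
    rw [hQdef]
    simp only [Matrix.transpose_mul, hΔT, Matrix.mul_assoc]
  have hPT : Pᵀ = Z * (Bᵀ * Zᵀ) := by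
    rw [hPdef]
    simp only [Matrix.transpose_mul, Matrix.transpose_transpose, Matrix.mul_assoc]
  have key1 : (Qᵀ * Q) * (Δ' * Zᵀ) = (Δ' * Zᵀ) * (Pᵀ * P) := by
    rw [hQT, hPT, hQdef, hPdef]
    simp only [Matrix.mul_assoc]
    rw [hΔΔ'X _ Zᵀ, hΔΔX _ (B * Zᵀ), hZZX _ (B * Zᵀ), hZZX _ (Bᵀ * (Dm * (B * Zᵀ))),
      hΔ'DX _ (Bᵀ * (Dm * (B * Zᵀ)))]
  have key2 : (Pᵀ * P) * (Z * Δ') = (Z * Δ') * (Qᵀ * Q) := by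
    rw [hPT, hQT, hPdef, hQdef]
    simp only [Matrix.mul_assoc]
    rw [hZZX _ Δ', hDΔ', hZZX _ (B * Δ), hΔ'ΔX _ (Bᵀ * (Δ * (Δ * (B * Δ)))),
      hΔΔX _ (B * Δ)]
  have key3 : Δ' * (Qᵀ * Q) = Bᵀ * (Δ * (Δ * (B * Δ))) := by
    rw [hQT, hQdef]
    simp only [Matrix.mul_assoc]
    rw [hΔ'ΔX _ (Bᵀ * (Δ * (Δ * (B * Δ))))]
  have key4 : Pᵀ * P = (Z * (Bᵀ * (Dm * B))) * Zᵀ := by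
    rw [hPT, hPdef]
    simp only [Matrix.mul_assoc]
    rw [hZZX _ (B * Zᵀ)]
  have key5 : Zᵀ * (Z * Δ') = Δ := by
    rw [hZZX _ Δ', hDΔ']
  have hsets : {r : ℝ | r ≠ 0 ∧ ∃ i, r =
        Real.sqrt ((Matrix.isHermitian_transpose_mul_self P).eigenvalues i)} =
      {r : ℝ | r ≠ 0 ∧ ∃ i, r =
        Real.sqrt ((Matrix.isHermitian_transpose_mul_self Q).eigenvalues i)} := by
    ext r
    simp only [Set.mem_setOf_eq]
    rw [sv_mem_iff', sv_mem_iff', real_conjTranspose' P, real_conjTranspose' Q]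
    constructor
    · rintro ⟨hr, v, hv, hPv⟩
      refine ⟨hr, (Δ' * Zᵀ) *ᵥ v, ?_, ?_⟩
      · intro h0
        have hZv : Zᵀ *ᵥ v = 0 := by
          have h1 : Δ *ᵥ ((Δ' * Zᵀ) *ᵥ v) = Zᵀ *ᵥ v := by
            rw [Matrix.mulVec_mulVec, ← Matrix.mul_assoc, hΔΔ', Matrix.one_mul]
          rw [h0, Matrix.mulVec_zero] at h1
          exact h1.symm
        have h2 : (Pᵀ * P) *ᵥ v = 0 := by
          rw [key4, ← Matrix.mulVec_mulVec, hZv, Matrix.mulVec_zero]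
        rw [hPv] at h2
        rcases smul_eq_zero.mp h2 with h3 | h3
        · exact mul_ne_zero hr.ne' hr.ne' h3
        · exact hv h3
      · rw [Matrix.mulVec_mulVec, key1, ← Matrix.mulVec_mulVec, hPv, Matrix.mulVec_smul]
    · rintro ⟨hr, u, hu, hQu⟩
      refine ⟨hr, (Z * Δ') *ᵥ u, ?_, ?_⟩
      · intro h0
        have hΔu : Δ *ᵥ u = 0 := by
          have h1 : Zᵀ *ᵥ ((Z * Δ') *ᵥ u) = Δ *ᵥ u := by
            rw [Matrix.mulVec_mulVec, key5]
          rw [h0, Matrix.mulVec_zero] at h1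
          exact h1.symm
        have h2 : u = 0 := by
          have h3 : Δ' *ᵥ (Δ *ᵥ u) = u := by
            rw [Matrix.mulVec_mulVec, hΔ'Δ, Matrix.one_mulVec]
          rw [hΔu, Matrix.mulVec_zero] at h3
          exact h3.symm
        exact hu h2
      · rw [Matrix.mulVec_mulVec, key2, ← Matrix.mulVec_mulVec, hQu, Matrix.mulVec_smul]
  constructor
  · exact congrArg sInf hsets
  · by_cases hne : Set.Nonempty {r : ℝ | r ≠ 0 ∧ ∃ i, r =
        Real.sqrt ((Matrix.isHermitian_transpose_mul_self P).eigenvalues i)}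
    · refine le_csInf hne ?_
      intro b hb
      rw [hsets] at hb
      obtain ⟨hb0, i, hbi⟩ := hb
      have hlamnn := eig_nonneg' Q i
      have hbpos : 0 < b := lt_of_le_of_ne (hbi ▸ Real.sqrt_nonneg _) (Ne.symm hb0)
      have hbb : b * b = (Matrix.isHermitian_transpose_mul_self Q).eigenvalues i := by
        rw [hbi, Real.mul_self_sqrt hlamnn]
      set u : Fin k → ℝ := ⇑((Matrix.isHermitian_transpose_mul_self Q).eigenvectorBasis i)
        with hudef
      have heig : (Qᴴ * Q) *ᵥ u =
          (Matrix.isHermitian_transpose_mul_self Q).eigenvalues i • u :=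
        (Matrix.isHermitian_transpose_mul_self Q).mulVec_eigenvectorBasis i
      have huu : u ⬝ᵥ u = 1 := basis_dot_self' (Matrix.isHermitian_transpose_mul_self Q) i
      have hlampos : 0 < (Matrix.isHermitian_transpose_mul_self Q).eigenvalues i := by
        rw [← hbb]
        positivity
      set w : Fin k → ℝ := Δ' *ᵥ u with hwdef
      have hΔw : Δ *ᵥ w = u := by
        rw [hwdef, Matrix.mulVec_mulVec, hΔΔ', Matrix.one_mulVec]
      have key3H : Δ' * (Qᴴ * Q) = Bᵀ * (Δ * (Δ * (B * Δ))) := by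
        rw [real_conjTranspose' Q]
        exact key3
      have hw_range : ∃ z : Fin k → ℝ, w = Bᵀ *ᵥ z := by
        refine ⟨((Matrix.isHermitian_transpose_mul_self Q).eigenvalues i)⁻¹ •
          ((Δ * (Δ * (B * Δ))) *ᵥ u), ?_⟩
        have h1 : u = ((Matrix.isHermitian_transpose_mul_self Q).eigenvalues i)⁻¹ •
            ((Qᴴ * Q) *ᵥ u) := by
          rw [heig, smul_smul, inv_mul_cancel₀ hlampos.ne', one_smul]
        calc w = Δ' *ᵥ u := hwdef
          _ = Δ' *ᵥ (((Matrix.isHermitian_transpose_mul_self Q).eigenvalues i)⁻¹ •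
              ((Qᴴ * Q) *ᵥ u)) := by rw [← h1]
          _ = ((Matrix.isHermitian_transpose_mul_self Q).eigenvalues i)⁻¹ •
              (Δ' *ᵥ ((Qᴴ * Q) *ᵥ u)) := by rw [Matrix.mulVec_smul]
          _ = ((Matrix.isHermitian_transpose_mul_self Q).eigenvalues i)⁻¹ •
              ((Δ' * (Qᴴ * Q)) *ᵥ u) := by rw [Matrix.mulVec_mulVec]
          _ = ((Matrix.isHermitian_transpose_mul_self Q).eigenvalues i)⁻¹ •
              ((Bᵀ * (Δ * (Δ * (B * Δ)))) *ᵥ u) := by rw [key3H]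
          _ = ((Matrix.isHermitian_transpose_mul_self Q).eigenvalues i)⁻¹ •
              (Bᵀ *ᵥ ((Δ * (Δ * (B * Δ))) *ᵥ u)) := by rw [← Matrix.mulVec_mulVec]
          _ = Bᵀ *ᵥ (((Matrix.isHermitian_transpose_mul_self Q).eigenvalues i)⁻¹ •
              ((Δ * (Δ * (B * Δ))) *ᵥ u)) := by rw [Matrix.mulVec_smul]
      obtain ⟨c, hc⟩ : ∃ c : Fin k → ℝ, ∀ i', c i' =
          ⇑((Matrix.isHermitian_transpose_mul_self B).eigenvectorBasis i') ⬝ᵥ w :=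
        ⟨_, fun _ => rfl⟩
      obtain ⟨d, hd⟩ : ∃ d : Fin k → ℝ, ∀ i', d i' =
          ⇑((Matrix.isHermitian_transpose_mul_self B).eigenvectorBasis i') ⬝ᵥ (Dm *ᵥ w) :=
        ⟨_, fun _ => rfl⟩
      obtain ⟨f, hf⟩ : ∃ f : Fin k → ℝ, ∀ i', f i' =
          (if (Matrix.isHermitian_transpose_mul_self B).eigenvalues i' = 0 then 0 else c i') :=
        ⟨_, fun _ => rfl⟩
      obtain ⟨gf, hgf⟩ : ∃ gf : Fin k → ℝ, ∀ i', gf i' =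
          (if (Matrix.isHermitian_transpose_mul_self B).eigenvalues i' = 0 then 0 else d i') :=
        ⟨_, fun _ => rfl⟩
      have hc0 : ∀ i', (Matrix.isHermitian_transpose_mul_self B).eigenvalues i' = 0 →
          c i' = 0 := by
        intro i' h0
        obtain ⟨z, hz⟩ := hw_range
        have hBe : B *ᵥ ⇑((Matrix.isHermitian_transpose_mul_self B).eigenvectorBasis i') = 0 := by
          have h1 := dot_mulVec_self' B
            ⇑((Matrix.isHermitian_transpose_mul_self B).eigenvectorBasis i')
          rw [real_conjTranspose' B, (Matrix.isHermitian_transpose_mul_self B).mulVec_eigenvectorBasis, h0, zero_smul,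
            dotProduct_zero] at h1
          exact dotProduct_self_eq_zero.mp h1
        rw [hc, hz, Matrix.dotProduct_mulVec, Matrix.vecMul_transpose, hBe,
          zero_dotProduct]
      have h_one : w ⬝ᵥ (Dm *ᵥ w) = 1 := by
        have h1 := dot_mulVec_self' Δ w
        rw [real_conjTranspose' Δ, hΔT, hΔΔ, hΔw, huu] at h1
        exact h1.symm
      have hnmin_le : ∀ j, ((nmin Ψ : ℕ) : ℝ) ≤ ((csize Ψ j : ℕ) : ℝ) := fun j =>
        Nat.cast_le.mpr (Nat.sInf_le ⟨j, rfl⟩)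
      have hnmin0 : (0:ℝ) ≤ ((nmin Ψ : ℕ) : ℝ) := Nat.cast_nonneg _
      have hs0 : 0 ≤ sigmaNZmin B := sigmaNZmin_nonneg' B
      have hDm_mv : ∀ (x : Fin k → ℝ) j, (Dm *ᵥ x) j = ((csize Ψ j : ℕ) : ℝ) * x j := by
        intro x j
        rw [hDmdef]
        exact Matrix.mulVec_diagonal _ _ _
      have hΔ_mv : ∀ (x : Fin k → ℝ) j, (Δ *ᵥ x) j = g j * x j := by
        intro x j
        rw [hΔdef]
        exact Matrix.mulVec_diagonal _ _ _
      have hnw : ((nmin Ψ : ℕ) : ℝ) * (w ⬝ᵥ w) ≤ 1 := by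
        rw [← h_one]
        calc ((nmin Ψ : ℕ) : ℝ) * (w ⬝ᵥ w) = ∑ j, ((nmin Ψ : ℕ) : ℝ) * (w j * w j) := by
              rw [dotProduct, Finset.mul_sum]
          _ ≤ ∑ j, w j * ((Dm *ᵥ w) j) := by
              refine Finset.sum_le_sum fun j _ => ?_
              rw [hDm_mv]
              have h2 := mul_le_mul_of_nonneg_right (hnmin_le j) (mul_self_nonneg (w j))
              calc ((nmin Ψ : ℕ) : ℝ) * (w j * w j) ≤ ((csize Ψ j : ℕ) : ℝ) * (w j * w j) := h2
                _ = w j * (((csize Ψ j : ℕ) : ℝ) * w j) := by ring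
          _ = w ⬝ᵥ (Dm *ᵥ w) := by rw [dotProduct]
      have h_diag : ∀ x : Fin k → ℝ,
          ((nmin Ψ : ℕ) : ℝ) * (x ⬝ᵥ x) ≤ (Δ *ᵥ x) ⬝ᵥ (Δ *ᵥ x) := by
        intro x
        calc ((nmin Ψ : ℕ) : ℝ) * (x ⬝ᵥ x) = ∑ j, ((nmin Ψ : ℕ) : ℝ) * (x j * x j) := by
              rw [dotProduct, Finset.mul_sum]
          _ ≤ ∑ j, (Δ *ᵥ x) j * (Δ *ᵥ x) j := by
              refine Finset.sum_le_sum fun j _ => ?_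
              rw [hΔ_mv]
              have h1 : (g j * x j) * (g j * x j) = ((csize Ψ j : ℕ) : ℝ) * (x j * x j) := by
                rw [← hgg j]; ring
              rw [h1]
              exact mul_le_mul_of_nonneg_right (hnmin_le j) (mul_self_nonneg _)
          _ = (Δ *ᵥ x) ⬝ᵥ (Δ *ᵥ x) := by rw [dotProduct]
      have h_wy : w ⬝ᵥ (Dm *ᵥ w) = ∑ i', c i' * d i' := by
        rw [parseval' (Matrix.isHermitian_transpose_mul_self B) w (Dm *ᵥ w)]
        exact Finset.sum_congr rfl fun i' _ => by rw [hc, hd]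
      have h_cd : ∑ i', c i' * d i' = ∑ i', f i' * gf i' := by
        refine Finset.sum_congr rfl fun i' _ => ?_
        rw [hf, hgf]
        by_cases h0 : (Matrix.isHermitian_transpose_mul_self B).eigenvalues i' = 0
        · rw [if_pos h0, if_pos h0, hc0 i' h0, zero_mul, zero_mul]
        · rw [if_neg h0, if_neg h0]
      have h_cs : 1 ≤ (∑ i', f i' ^ 2) * (∑ i', gf i' ^ 2) := by
        have h1 : (1:ℝ) = (∑ i', f i' * gf i') ^ 2 := by
          rw [← h_cd, ← h_wy, h_one, one_pow]
        rw [h1]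
        exact Finset.sum_mul_sq_le_sq_mul_sq Finset.univ f gf
      have h_fw : ∑ i', f i' ^ 2 ≤ w ⬝ᵥ w := by
        have h1 : w ⬝ᵥ w = ∑ i', c i' * c i' := by
          rw [parseval' (Matrix.isHermitian_transpose_mul_self B) w w]
          exact Finset.sum_congr rfl fun i' _ => by rw [hc]
        rw [h1]
        refine Finset.sum_le_sum fun i' _ => ?_
        rw [hf]
        by_cases h0 : (Matrix.isHermitian_transpose_mul_self B).eigenvalues i' = 0
        · rw [if_pos h0]
          simpa using mul_self_nonneg (c i')
        · rw [if_neg h0, pow_two]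
      have hT0 : 0 ≤ ∑ i', gf i' ^ 2 := Finset.sum_nonneg fun i' _ => sq_nonneg _
      have hf0 : 0 ≤ ∑ i', f i' ^ 2 := Finset.sum_nonneg fun i' _ => sq_nonneg _
      have hww0 : 0 ≤ w ⬝ᵥ w := by
        rw [dotProduct]
        exact Finset.sum_nonneg fun j _ => mul_self_nonneg _
      have hTn : ((nmin Ψ : ℕ) : ℝ) ≤ ∑ i', gf i' ^ 2 := by
        calc ((nmin Ψ : ℕ) : ℝ) = ((nmin Ψ : ℕ) : ℝ) * 1 := (mul_one _).symm
          _ ≤ ((nmin Ψ : ℕ) : ℝ) * ((∑ i', f i' ^ 2) * (∑ i', gf i' ^ 2)) :=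
              mul_le_mul_of_nonneg_left h_cs hnmin0
          _ = (((nmin Ψ : ℕ) : ℝ) * (∑ i', f i' ^ 2)) * (∑ i', gf i' ^ 2) := by ring
          _ ≤ (((nmin Ψ : ℕ) : ℝ) * (w ⬝ᵥ w)) * (∑ i', gf i' ^ 2) :=
              mul_le_mul_of_nonneg_right (mul_le_mul_of_nonneg_left h_fw hnmin0) hT0
          _ ≤ 1 * (∑ i', gf i' ^ 2) := mul_le_mul_of_nonneg_right hnw hT0
          _ = ∑ i', gf i' ^ 2 := one_mul _
      have h_med : sigmaNZmin B ^ 2 * (∑ i', gf i' ^ 2) ≤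
          ∑ i', (Matrix.isHermitian_transpose_mul_self B).eigenvalues i' * (d i' * d i') := by
        rw [Finset.mul_sum]
        refine Finset.sum_le_sum fun i' _ => ?_
        rw [hgf]
        by_cases h0 : (Matrix.isHermitian_transpose_mul_self B).eigenvalues i' = 0
        · rw [if_pos h0, h0]
          simp
        · rw [if_neg h0]
          have hμpos : 0 < (Matrix.isHermitian_transpose_mul_self B).eigenvalues i' :=
            lt_of_le_of_ne (eig_nonneg' B i') (Ne.symm h0)
          have hsle : sigmaNZmin B ≤
              Real.sqrt ((Matrix.isHermitian_transpose_mul_self B).eigenvalues i') :=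
            csInf_le (sigmaNZmin_bddBelow' B) ⟨Real.sqrt_ne_zero'.mpr hμpos, i', rfl⟩
          have hs2 : sigmaNZmin B ^ 2 ≤
              (Matrix.isHermitian_transpose_mul_self B).eigenvalues i' := by
            have h2 := mul_le_mul hsle hsle hs0 (Real.sqrt_nonneg _)
            rw [Real.mul_self_sqrt hμpos.le] at h2
            rw [pow_two]
            exact h2
          calc sigmaNZmin B ^ 2 * d i' ^ 2 ≤
              (Matrix.isHermitian_transpose_mul_self B).eigenvalues i' * d i' ^ 2 :=
                mul_le_mul_of_nonneg_right hs2 (sq_nonneg _)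
            _ = (Matrix.isHermitian_transpose_mul_self B).eigenvalues i' * (d i' * d i') := by
                rw [pow_two]
      have h_A : ∑ i', (Matrix.isHermitian_transpose_mul_self B).eigenvalues i' *
          (d i' * d i') = (B *ᵥ (Dm *ᵥ w)) ⬝ᵥ (B *ᵥ (Dm *ᵥ w)) := by
        rw [dot_mulVec_self' B (Dm *ᵥ w),
          parseval' (Matrix.isHermitian_transpose_mul_self B) (Dm *ᵥ w) ((Bᴴ * B) *ᵥ (Dm *ᵥ w))]
        refine Finset.sum_congr rfl fun i' _ => ?_
        rw [real_conjTranspose' B, basis_dot_mulVec' (Matrix.isHermitian_transpose_mul_self B) i' (Dm *ᵥ w), ← hd i']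
        ring
      have hQu : Q *ᵥ u = Δ *ᵥ (B *ᵥ (Dm *ᵥ w)) := by
        rw [← hΔw, Matrix.mulVec_mulVec]
        have hQΔ : Q * Δ = Δ * (B * Dm) := by
          rw [hQdef]
          simp only [Matrix.mul_assoc]
          rw [hΔΔ]
        rw [hQΔ, ← Matrix.mulVec_mulVec, ← Matrix.mulVec_mulVec]
      have h_lam : (Matrix.isHermitian_transpose_mul_self Q).eigenvalues i =
          (Δ *ᵥ (B *ᵥ (Dm *ᵥ w))) ⬝ᵥ (Δ *ᵥ (B *ᵥ (Dm *ᵥ w))) := by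
        have h2 := dot_mulVec_self' Q u
        rw [heig, dotProduct_smul, smul_eq_mul, huu, mul_one, hQu] at h2
        exact h2.symm
      have hchain : (((nmin Ψ : ℕ) : ℝ) * sigmaNZmin B) * (((nmin Ψ : ℕ) : ℝ) * sigmaNZmin B)
          ≤ b * b := by
        rw [hbb, h_lam]
        calc (((nmin Ψ : ℕ) : ℝ) * sigmaNZmin B) * (((nmin Ψ : ℕ) : ℝ) * sigmaNZmin B)
            = ((nmin Ψ : ℕ) : ℝ) * (sigmaNZmin B ^ 2 * ((nmin Ψ : ℕ) : ℝ)) := by ring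
          _ ≤ ((nmin Ψ : ℕ) : ℝ) * (sigmaNZmin B ^ 2 * (∑ i', gf i' ^ 2)) :=
              mul_le_mul_of_nonneg_left (mul_le_mul_of_nonneg_left hTn (sq_nonneg _)) hnmin0
          _ ≤ ((nmin Ψ : ℕ) : ℝ) * (∑ i',
              (Matrix.isHermitian_transpose_mul_self B).eigenvalues i' * (d i' * d i')) :=
              mul_le_mul_of_nonneg_left h_med hnmin0
          _ = ((nmin Ψ : ℕ) : ℝ) * ((B *ᵥ (Dm *ᵥ w)) ⬝ᵥ (B *ᵥ (Dm *ᵥ w))) := by rw [h_A]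
          _ ≤ (Δ *ᵥ (B *ᵥ (Dm *ᵥ w))) ⬝ᵥ (Δ *ᵥ (B *ᵥ (Dm *ᵥ w))) := h_diag _
      calc ((nmin Ψ : ℕ) : ℝ) * sigmaNZmin B =
          Real.sqrt ((((nmin Ψ : ℕ) : ℝ) * sigmaNZmin B) * (((nmin Ψ : ℕ) : ℝ) * sigmaNZmin B))
            := (Real.sqrt_mul_self (by positivity)).symm
        _ ≤ Real.sqrt (b * b) := Real.sqrt_le_sqrt hchain
        _ = b := Real.sqrt_mul_self hbpos.le
    · rw [Set.not_nonempty_iff_eq_empty] at hne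
      have hP0 : sigmaNZmin P = 0 := by
        show sInf _ = 0
        rw [hne, Real.sInf_empty]
      have hEig0 : ∀ i0, (Matrix.isHermitian_transpose_mul_self P).eigenvalues i0 = 0 := by
        intro i0
        have h1 : Real.sqrt ((Matrix.isHermitian_transpose_mul_self P).eigenvalues i0) = 0 := by
          by_contra h
          have hmem : Real.sqrt ((Matrix.isHermitian_transpose_mul_self P).eigenvalues i0) ∈
              {r : ℝ | r ≠ 0 ∧ ∃ i, r =
                Real.sqrt ((Matrix.isHermitian_transpose_mul_self P).eigenvalues i)} :=
            ⟨h, i0, rfl⟩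
          rw [hne] at hmem
          exact hmem
        have h2 := eig_nonneg' P i0
        have h3 : (Matrix.isHermitian_transpose_mul_self P).eigenvalues i0 ≤ 0 :=
          Real.sqrt_eq_zero'.mp h1
        linarith
      have hPtP : Pᴴ * P = 0 := by
        have hsp := (Matrix.isHermitian_transpose_mul_self P).spectral_theorem
        rw [real_conjTranspose' P, hsp]
        have hdg : Matrix.diagonal (RCLike.ofReal ∘
            (Matrix.isHermitian_transpose_mul_self P).eigenvalues) =
            (0 : Matrix (Fin n) (Fin n) ℝ) := by
          have h4 : (RCLike.ofReal ∘ (Matrix.isHermitian_transpose_mul_self P).eigenvalues) =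
              (fun _ : Fin n => (0:ℝ)) := by
            funext i0
            simp [Function.comp, hEig0 i0]
          rw [h4, Matrix.diagonal_zero]
        rw [hdg, map_zero]
      have hPz : P = 0 := Matrix.conjTranspose_mul_self_eq_zero.mp hPtP
      have hDBD : Dm * B * Dm = 0 := by
        have h1 : Zᵀ * P * Z = Dm * B * Dm := by
          rw [hPdef, ← hZZ]
          simp only [← Matrix.mul_assoc]
        rw [← h1, hPz, Matrix.mul_zero, Matrix.zero_mul]
      have hB0 : B = 0 := by
        ext j l
        have h3 := congrFun (congrFun hDBD j) l
        have h4 : (Dm * B * Dm) j l = ((csize Ψ j : ℕ) : ℝ) * B j l * ((csize Ψ l : ℕ) : ℝ) := by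
          rw [hDmdef, Matrix.mul_diagonal, Matrix.diagonal_mul]
        rw [h4] at h3
        have h5 : ((csize Ψ j : ℕ) : ℝ) ≠ 0 := (hnpos j).ne'
        have h6 : ((csize Ψ l : ℕ) : ℝ) ≠ 0 := (hnpos l).ne'
        have h7 : B j l = 0 := by
          rcases mul_eq_zero.mp h3 with h8 | h8
          · rcases mul_eq_zero.mp h8 with h9 | h9
            · exact absurd h9 h5
            · exact h9
          · exact absurd h8 h6
        simpa using h7
      have hsB : sigmaNZmin B = 0 := by
        have hset : {r : ℝ | r ≠ 0 ∧ ∃ i0, r =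
            Real.sqrt ((Matrix.isHermitian_transpose_mul_self B).eigenvalues i0)} = ∅ := by
          ext r
          simp only [Set.mem_setOf_eq, Set.mem_empty_iff_false, iff_false]
          rintro ⟨hr, i0, hi0⟩
          have hBB : Bᴴ * B = 0 := by rw [hB0, Matrix.mul_zero]
          have h4 := (Matrix.isHermitian_transpose_mul_self B).mulVec_eigenvectorBasis i0
          have h6 : (Matrix.isHermitian_transpose_mul_self B).eigenvalues i0 •
              ⇑((Matrix.isHermitian_transpose_mul_self B).eigenvectorBasis i0) = 0 := by
            rw [← h4]
            exact (congrArg (fun M : Matrix (Fin k) (Fin k) ℝ => M *ᵥ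
              ⇑((Matrix.isHermitian_transpose_mul_self B).eigenvectorBasis i0)) hBB).trans
              (Matrix.zero_mulVec _)
          rcases smul_eq_zero.mp h6 with h5 | h5
          · rw [h5, Real.sqrt_zero] at hi0
            exact hr hi0
          · exact basis_ne_zero' _ i0 h5
        show sInf _ = 0
        rw [hset, Real.sInf_empty]
      rw [hsB, mul_zero, hP0]

end HSBM
end
end

section
/- Let b > 0 and let S = X₁ + ⋯ + X_n be the sum of n mutually independent random variables each taking values in [0,b]. There exists a constant c₇ > 0 depending only on b such that for every a ≥ E[S] and every k ≥ c₇: Pr(S > k·a) ≤ exp(−(1/(2b))·k·log k·a). -/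
open MeasureTheory ProbabilityTheory Finset Matrix Filter

noncomputable section

namespace HSBM

/-- large-deviation bound with a `k log k` exponent. -/
theorem statement9 (b : ℝ) (hb : 0 < b) :
    ∃ c₇ : ℝ, 0 < c₇ ∧
      ∀ (Ω : Type) [MeasurableSpace Ω] (μ : Measure Ω), IsProbabilityMeasure μ →
      ∀ (n : ℕ) (X : Fin n → Ω → ℝ),
        (∀ i, Measurable (X i)) →
        (∀ i, ∀ᵐ ω ∂μ, X i ω ∈ Set.Icc (0 : ℝ) b) →
        iIndepFun X μ →
        ∀ a : ℝ, (∫ ω, ∑ i, X i ω ∂μ) ≤ a →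
        ∀ K : ℝ, c₇ ≤ K →
        μ {ω | K * a < ∑ i, X i ω} ≤
          ENNReal.ofReal (Real.exp (-(1 / (2 * b)) * K * Real.log K * a)) := by
  refine ⟨Real.exp 2, Real.exp_pos 2, ?_⟩
  intro Ω _ μ hμ n X hmeas hrange hindep a ha K hK
  have hK0 : (0:ℝ) < K := lt_of_lt_of_le (Real.exp_pos 2) hK
  have hK1 : (1:ℝ) ≤ K := le_trans (Real.one_le_exp (by norm_num)) hK
  have hlog2 : (2:ℝ) ≤ Real.log K := by
    rw [show (2:ℝ) = Real.log (Real.exp 2) by simp]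
    exact Real.log_le_log (Real.exp_pos 2) hK
  set t : ℝ := Real.log K / b with ht_def
  have ht0 : 0 < t := div_pos (lt_of_lt_of_le (by norm_num) hlog2) hb
  have htb : t * b = Real.log K := div_mul_cancel₀ _ hb.ne'
  have hetb : Real.exp (t * b) = K := by rw [htb, Real.exp_log hK0]
  -- integrability of each X i
  have hXint : ∀ i, Integrable (X i) μ := by
    intro i
    refine Integrable.mono' (integrable_const b) (hmeas i).aestronglyMeasurable ?_
    filter_upwards [hrange i] with ω hω
    rw [Real.norm_eq_abs, abs_of_nonneg hω.1]; exact hω.2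
  have hEXnn : ∀ i, 0 ≤ ∫ ω, X i ω ∂μ := fun i =>
    integral_nonneg_of_ae ((hrange i).mono fun ω hω => hω.1)
  have hES : (∫ ω, ∑ i, X i ω ∂μ) = ∑ i, ∫ ω, X i ω ∂μ :=
    integral_finset_sum _ fun i _ => hXint i
  have ha0 : 0 ≤ a := le_trans (by rw [hES]; exact Finset.sum_nonneg fun i _ => hEXnn i) ha
  -- integrability of exp (t * X i)
  have hexpint : ∀ i, Integrable (fun ω => Real.exp (t * X i ω)) μ := by
    intro i
    refine Integrable.mono' (integrable_const (Real.exp (t * b)))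
      ((hmeas i).const_mul t).exp.aestronglyMeasurable ?_
    filter_upwards [hrange i] with ω hω
    rw [Real.norm_eq_abs, abs_of_pos (Real.exp_pos _)]
    exact Real.exp_le_exp.2 (mul_le_mul_of_nonneg_left hω.2 ht0.le)
  -- per-variable mgf bound
  have hmgf : ∀ i, mgf (X i) μ t ≤ Real.exp ((∫ ω, X i ω ∂μ) / b * (K - 1)) := by
    intro i
    have hpt : ∀ᵐ ω ∂μ, Real.exp (t * X i ω) ≤ 1 + X i ω / b * (K - 1) := by
      filter_upwards [hrange i] with ω hω
      have hxb : X i ω / b ∈ Set.Icc (0:ℝ) 1 := by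
        constructor
        · exact div_nonneg hω.1 hb.le
        · rw [div_le_one hb]; exact hω.2
      have := convexOn_exp.2 (Set.mem_univ (0:ℝ)) (Set.mem_univ (t * b))
        (by linarith [hxb.2] : (0:ℝ) ≤ 1 - X i ω / b) hxb.1 (by ring)
      simp only [smul_eq_mul, mul_zero, zero_add, Real.exp_zero] at this
      have heq : X i ω / b * (t * b) = t * X i ω := by field_simp
      rw [heq] at this
      calc Real.exp (t * X i ω) ≤ (1 - X i ω / b) * 1 + X i ω / b * Real.exp (t * b) := this
        _ = 1 + X i ω / b * (K - 1) := by rw [hetb]; ring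
    have h1 : mgf (X i) μ t ≤ ∫ ω, (1 + X i ω / b * (K - 1)) ∂μ := by
      refine integral_mono_ae (hexpint i) ?_ hpt
      exact (integrable_const 1).add (((hXint i).div_const b).mul_const (K - 1))
    have h2 : (∫ ω, (1 + X i ω / b * (K - 1)) ∂μ) = 1 + (∫ ω, X i ω ∂μ) / b * (K - 1) := by
      rw [integral_add (integrable_const 1) (((hXint i).div_const b).mul_const (K - 1)),
        integral_const, integral_mul_const, integral_div]
      simp [measure_univ]
    calc mgf (X i) μ t ≤ 1 + (∫ ω, X i ω ∂μ) / b * (K - 1) := h2 ▸ h1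
      _ ≤ Real.exp ((∫ ω, X i ω ∂μ) / b * (K - 1)) := by
          linarith [Real.add_one_le_exp ((∫ ω, X i ω ∂μ) / b * (K - 1))]
  -- mgf of the sum
  have hmgfS : mgf (∑ i, X i) μ t ≤ Real.exp (a / b * (K - 1)) := by
    rw [hindep.mgf_sum hmeas Finset.univ]
    calc ∏ i, mgf (X i) μ t
        ≤ ∏ i, Real.exp ((∫ ω, X i ω ∂μ) / b * (K - 1)) :=
          Finset.prod_le_prod (fun i _ => mgf_nonneg) (fun i _ => hmgf i)
      _ = Real.exp (∑ i, (∫ ω, X i ω ∂μ) / b * (K - 1)) := (Real.exp_sum _ _).symm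
      _ ≤ Real.exp (a / b * (K - 1)) := by
          apply Real.exp_le_exp.2
          have : ∑ i, (∫ ω, X i ω ∂μ) / b * (K - 1)
              = (∫ ω, ∑ i, X i ω ∂μ) / b * (K - 1) := by
            rw [hES, Finset.sum_div, Finset.sum_mul]
          rw [this]
          have hc : 0 ≤ (K - 1) / b := div_nonneg (by linarith [hK1]) hb.le
          calc (∫ ω, ∑ i, X i ω ∂μ) / b * (K - 1)
              = (∫ ω, ∑ i, X i ω ∂μ) * ((K - 1) / b) := by ring
            _ ≤ a * ((K - 1) / b) := mul_le_mul_of_nonneg_right ha hc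
            _ = a / b * (K - 1) := by ring
  -- integrability of exp (t * S)
  have hSint : Integrable (fun ω => Real.exp (t * (∑ i, X i) ω)) μ := by
    simp only [Finset.sum_apply]
    have : Integrable (fun ω => ∏ i, Real.exp (t * X i ω)) μ := by
      refine Integrable.mono' (integrable_const ((Real.exp (t * b)) ^ n))
        (Finset.univ.measurable_prod fun i _ => ((hmeas i).const_mul t).exp).aestronglyMeasurable ?_
      filter_upwards [ae_all_iff.2 hrange] with ω hω
      rw [Real.norm_eq_abs, abs_of_pos (Finset.prod_pos fun i _ => Real.exp_pos _)]
      calc ∏ i, Real.exp (t * X i ω) ≤ ∏ _i : Fin n, Real.exp (t * b) :=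
            Finset.prod_le_prod (fun i _ => (Real.exp_pos _).le)
              (fun i _ => Real.exp_le_exp.2 (mul_le_mul_of_nonneg_left (hω i).2 ht0.le))
        _ = (Real.exp (t * b)) ^ n := by simp
    refine this.congr (Filter.Eventually.of_forall fun ω => ?_)
    show (∏ i, Real.exp (t * X i ω)) = Real.exp (t * ∑ i, X i ω)
    rw [← Real.exp_sum, Finset.mul_sum]
  -- Chernoff
  have hcher := measure_ge_le_exp_mul_mgf (μ := μ) (X := ∑ i, X i) (t := t) (K * a)
    ht0.le hSint
  have harith : Real.exp (-t * (K * a)) * Real.exp (a / b * (K - 1))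
      ≤ Real.exp (-(1 / (2 * b)) * K * Real.log K * a) := by
    rw [← Real.exp_add]
    apply Real.exp_le_exp.2
    rw [ht_def]
    have key : K - 1 ≤ 1 / 2 * (K * Real.log K) := by nlinarith
    have hab : 0 ≤ a / b := div_nonneg ha0 hb.le
    have : -(Real.log K / b) * (K * a) + a / b * (K - 1)
        = (a / b) * ((K - 1) - K * Real.log K) := by ring
    rw [this]
    have hrhs : -(1 / (2 * b)) * K * Real.log K * a
        = (a / b) * (-(1 / 2) * (K * Real.log K)) := by field_simp
    rw [hrhs]
    apply mul_le_mul_of_nonneg_left _ hab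
    linarith
  have hfin : μ {ω | K * a ≤ (∑ i, X i) ω} ≤
      ENNReal.ofReal (Real.exp (-(1 / (2 * b)) * K * Real.log K * a)) := by
    rw [← ENNReal.ofReal_toReal (measure_ne_top μ _)]
    exact ENNReal.ofReal_le_ofReal (hcher.trans
      ((mul_le_mul_of_nonneg_left hmgfS (Real.exp_pos _).le).trans harith))
  refine le_trans (measure_mono ?_) hfin
  intro ω hω
  simp only [Set.mem_setOf_eq, Finset.sum_apply] at *
  exact hω.le

end HSBM
end
end

section
/- Fix constants c, c', p > 0. There exists γ₀ ∈ (0,1) such that for every γ ∈ (0,γ₀) the following holds: suppose for each n we are given m_n ∈ N and α_n ∈ (0,1) with p·α_n·m_n ≥ c'·log n, together with mutually independent random variables W₁, …, W_{M_n} taking values in [0,1] with E[W_i] ≤ p·α_n for every i, where M_n ≤ c·γ·m_n. Then n·Pr(Σ_{i=1}^{M_n} W_i > p·α_n·m_n/√(log(1/γ))) → 0 as n → ∞. -/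
open MeasureTheory ProbabilityTheory Finset Matrix Filter

noncomputable section

namespace HSBM

section Aux
lemma aux_mgf_le {Ω : Type*} [MeasurableSpace Ω] {μ : Measure Ω}
    [IsProbabilityMeasure μ] {X : Ω → ℝ} (hX : Measurable X)
    (hr : ∀ᵐ ω ∂μ, X ω ∈ Set.Icc (0:ℝ) 1) {b s : ℝ} (hb : 0 ≤ b)
    (hmean : ∫ ω, X ω ∂μ ≤ b) (hs : 0 ≤ s) :
    mgf X μ s ≤ Real.exp (Real.exp s * b) := by
  have hXint : Integrable X μ := by
    refine (integrable_const (1:ℝ)).mono' hX.aestronglyMeasurable ?_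
    filter_upwards [hr] with ω hω
    rw [Real.norm_eq_abs, abs_of_nonneg hω.1]; exact hω.2
  have hexpint : Integrable (fun ω => Real.exp (s * X ω)) μ := by
    refine (integrable_const (Real.exp s)).mono'
      ((hX.const_mul s).exp).aestronglyMeasurable ?_
    filter_upwards [hr] with ω hω
    rw [Real.norm_eq_abs, abs_of_nonneg (Real.exp_pos _).le]
    exact Real.exp_le_exp.2 (by nlinarith [hω.1, hω.2])
  have hptwise : ∀ᵐ ω ∂μ, Real.exp (s * X ω) ≤ 1 + (Real.exp s - 1) * X ω := by
    filter_upwards [hr] with ω hω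
    have h : Real.exp (X ω • s + (1 - X ω) • (0:ℝ)) ≤
        X ω • Real.exp s + (1 - X ω) • Real.exp 0 :=
      convexOn_exp.2 (Set.mem_univ _) (Set.mem_univ _) hω.1 (by linarith [hω.2]) (by ring)
    simp only [smul_eq_mul, mul_zero, add_zero, Real.exp_zero] at h
    calc Real.exp (s * X ω) = Real.exp (X ω * s) := by ring_nf
      _ ≤ X ω * Real.exp s + (1 - X ω) * 1 := h
      _ = 1 + (Real.exp s - 1) * X ω := by ring
  have h2 : Integrable (fun ω => 1 + (Real.exp s - 1) * X ω) μ :=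
    (integrable_const 1).add (hXint.const_mul _)
  calc mgf X μ s = ∫ ω, Real.exp (s * X ω) ∂μ := rfl
    _ ≤ ∫ ω, 1 + (Real.exp s - 1) * X ω ∂μ := integral_mono_ae hexpint h2 hptwise
    _ = 1 + (Real.exp s - 1) * ∫ ω, X ω ∂μ := by
        rw [integral_add (integrable_const 1) (hXint.const_mul _),
          integral_const, integral_const_mul]
        simp
    _ ≤ 1 + (Real.exp s - 1) * b := by
        have : (0:ℝ) ≤ Real.exp s - 1 := by
          have := Real.one_le_exp hs; linarith
        nlinarith
    _ ≤ Real.exp ((Real.exp s - 1) * b) := by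
        have := Real.add_one_le_exp ((Real.exp s - 1) * b); linarith
    _ ≤ Real.exp (Real.exp s * b) := by
        apply Real.exp_le_exp.2; nlinarith

lemma aux_tail {Ω : Type*} [MeasurableSpace Ω] {μ : Measure Ω}
    [IsProbabilityMeasure μ] {N : ℕ} {X : Fin N → Ω → ℝ}
    (hmeas : ∀ j, Measurable (X j))
    (hr : ∀ j, ∀ᵐ ω ∂μ, X j ω ∈ Set.Icc (0:ℝ) 1)
    (hindep : iIndepFun X μ)
    {b : ℝ} (hb : 0 ≤ b) (hmean : ∀ j, ∫ ω, X j ω ∂μ ≤ b)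
    {s ε : ℝ} (hs : 0 ≤ s) :
    (μ {ω | ε < ∑ j, X j ω}).toReal ≤
      Real.exp (-s * ε) * Real.exp ((N : ℝ) * (Real.exp s * b)) := by
  have hall : ∀ᵐ ω ∂μ, ∀ j, X j ω ∈ Set.Icc (0:ℝ) 1 := ae_all_iff.2 hr
  have hSmeas : Measurable fun ω => ∑ j, X j ω := by
    exact Finset.measurable_sum _ fun j _ => hmeas j
  have hint : Integrable (fun ω => Real.exp (s * ∑ j, X j ω)) μ := by
    refine (integrable_const (Real.exp (s * N))).mono'
      ((hSmeas.const_mul s).exp).aestronglyMeasurable ?_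
    filter_upwards [hall] with ω hω
    rw [Real.norm_eq_abs, abs_of_nonneg (Real.exp_pos _).le]
    apply Real.exp_le_exp.2
    apply mul_le_mul_of_nonneg_left _ hs
    calc ∑ j, X j ω ≤ ∑ j : Fin N, (1:ℝ) :=
          Finset.sum_le_sum fun j _ => (hω j).2
      _ = N := by simp
  have hmono : (μ {ω | ε < ∑ j, X j ω}).toReal ≤ (μ {ω | ε ≤ ∑ j, X j ω}).toReal := by
    apply ENNReal.toReal_mono (measure_ne_top _ _)
    exact measure_mono (Set.setOf_subset_setOf.2 fun ω hω => le_of_lt hω)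
  have hcher := measure_ge_le_exp_mul_mgf (μ := μ) (X := fun ω => ∑ j, X j ω) ε hs hint
  have hfun : (fun ω => ∑ j, X j ω) = ∑ j, X j := by
    funext ω; simp [Finset.sum_apply]
  have hmgf : mgf (fun ω => ∑ j, X j ω) μ s ≤ Real.exp ((N : ℝ) * (Real.exp s * b)) := by
    rw [hfun, hindep.mgf_sum hmeas]
    calc ∏ j, mgf (X j) μ s ≤ ∏ j : Fin N, Real.exp (Real.exp s * b) :=
          Finset.prod_le_prod (fun j _ => mgf_nonneg)
            (fun j _ => aux_mgf_le (hmeas j) (hr j) hb (hmean j) hs)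
      _ = Real.exp ((N : ℝ) * (Real.exp s * b)) := by
          rw [Finset.prod_const, ← Real.exp_nat_mul]; simp
  calc (μ {ω | ε < ∑ j, X j ω}).toReal ≤ (μ {ω | ε ≤ ∑ j, X j ω}).toReal := hmono
    _ ≤ Real.exp (-s * ε) * mgf (fun ω => ∑ j, X j ω) μ s := hcher
    _ ≤ Real.exp (-s * ε) * Real.exp ((N:ℝ) * (Real.exp s * b)) := by
        exact mul_le_mul_of_nonneg_left hmgf (Real.exp_pos _).le

end Aux

/-- the contribution of a small fraction of edges is marginal. -/
theorem statement15 (c c' p : ℝ) (hc : 0 < c) (hc' : 0 < c') (hp : 0 < p) :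
    ∃ γ₀ : ℝ, 0 < γ₀ ∧ γ₀ < 1 ∧
      ∀ γ : ℝ, 0 < γ → γ < γ₀ →
      ∀ (m : ℕ → ℕ) (a : ℕ → ℝ) (M : ℕ → ℕ)
        (Ω : ℕ → Type) [∀ i, MeasurableSpace (Ω i)] (μ : ∀ i, Measure (Ω i)),
        (∀ i, IsProbabilityMeasure (μ i)) →
        (∀ i, 0 < a i) → (∀ i, a i < 1) →
        (∀ i : ℕ, c' * Real.log i ≤ p * a i * m i) →
        (∀ i, (M i : ℝ) ≤ c * γ * m i) →
        ∀ W : ∀ i, Fin (M i) → Ω i → ℝ,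
          (∀ i j, Measurable (W i j)) →
          (∀ i j, ∀ᵐ ω ∂μ i, W i j ω ∈ Set.Icc (0 : ℝ) 1) →
          (∀ i, iIndepFun (W i) (μ i)) →
          (∀ i j, (∫ ω, W i j ω ∂μ i) ≤ p * a i) →
          Tendsto (fun i : ℕ => (i : ℝ) *
              ((μ i) {ω | p * a i * m i / Real.sqrt (Real.log (1 / γ)) <
                ∑ j, W i j ω}).toReal)
            atTop (nhds 0) := by
  classical
  set L₀ : ℝ := max 1 (max (4 * c ^ 2) (16 / c' ^ 2)) with hL₀def
  have hL₀1 : (1:ℝ) ≤ L₀ := le_max_left _ _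
  refine ⟨Real.exp (-(L₀ + 1)), Real.exp_pos _, ?_, ?_⟩
  · rw [Real.exp_lt_one_iff]; linarith
  intro γ hγ hγ' m a M Ω _ μ hprob ha ha1 hlog hM W hWmeas hWrange hWindep hWmean
  set L : ℝ := Real.log (1 / γ) with hLdef
  have hinvγ : (0:ℝ) < 1 / γ := by positivity
  have hexpL : Real.exp L = 1 / γ := Real.exp_log hinvγ
  have hL : L₀ + 1 ≤ L := by
    have h1 : Real.exp (L₀ + 1) ≤ 1 / γ := by
      rw [le_div_iff₀ hγ]
      have := hγ'.le
      calc Real.exp (L₀ + 1) * γ ≤ Real.exp (L₀ + 1) * Real.exp (-(L₀ + 1)) := by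
            exact mul_le_mul_of_nonneg_left this (Real.exp_pos _).le
        _ = 1 := by rw [← Real.exp_add, show L₀ + 1 + -(L₀ + 1) = 0 by ring, Real.exp_zero]
    rw [← hexpL] at h1
    exact le_of_not_gt fun hlt => absurd h1 (not_le.2 (Real.exp_lt_exp.2 hlt))
  have hL0 : (0:ℝ) < L := by linarith
  have hsL0 : (0:ℝ) < Real.sqrt L := Real.sqrt_pos.2 hL0
  have h2c : 2 * c ≤ Real.sqrt L := by
    have h1 : (2 * c) ^ 2 ≤ L := by
      have : 4 * c ^ 2 ≤ L₀ := le_trans (le_max_left _ _) (le_max_right _ _)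
      nlinarith
    calc 2 * c = Real.sqrt ((2 * c) ^ 2) := (Real.sqrt_sq (by positivity)).symm
      _ ≤ Real.sqrt L := Real.sqrt_le_sqrt h1
  have h4 : 4 ≤ Real.sqrt L * c' := by
    have h1 : (4 / c') ^ 2 ≤ L := by
      have : 16 / c' ^ 2 ≤ L₀ := le_trans (le_max_right _ _) (le_max_right _ _)
      have h2 : (4 / c') ^ 2 = 16 / c' ^ 2 := by rw [div_pow]; norm_num
      linarith
    have h3 : 4 / c' ≤ Real.sqrt L := by
      calc 4 / c' = Real.sqrt ((4 / c') ^ 2) := (Real.sqrt_sq (by positivity)).symm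
        _ ≤ Real.sqrt L := Real.sqrt_le_sqrt h1
    calc (4:ℝ) = (4 / c') * c' := by field_simp
      _ ≤ Real.sqrt L * c' := mul_le_mul_of_nonneg_right h3 hc'.le
  apply squeeze_zero' (g := fun n : ℕ => (n : ℝ)⁻¹)
  · exact Eventually.of_forall fun n =>
      mul_nonneg (Nat.cast_nonneg n) ENNReal.toReal_nonneg
  · filter_upwards [Filter.eventually_ge_atTop 1] with n hn
    haveI := hprob n
    have hn' : (0:ℝ) < n := by exact_mod_cast hn
    have hpa : (0:ℝ) < p * a n := mul_pos hp (ha n)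
    set Pm : ℝ := p * a n * m n with hPmdef
    have hPm0 : (0:ℝ) ≤ Pm := mul_nonneg hpa.le (Nat.cast_nonneg _)
    have htail := aux_tail (hmeas := hWmeas n) (hr := hWrange n) (hindep := hWindep n)
      (b := p * a n) hpa.le (hWmean n) (s := L)
      (ε := p * a n * m n / Real.sqrt L) hL0.le
    have hMB : (M n : ℝ) * (Real.exp L * (p * a n)) ≤ c * Pm := by
      rw [hexpL]
      calc (M n : ℝ) * (1 / γ * (p * a n))
          ≤ (c * γ * m n) * (1 / γ * (p * a n)) :=
            mul_le_mul_of_nonneg_right (hM n) (mul_nonneg (by positivity) hpa.le)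
        _ = c * Pm := by field_simp [hPmdef]; ring
    have hneg : -L * (Pm / Real.sqrt L) = -(Real.sqrt L) * Pm := by
      have hdiv : L / Real.sqrt L = Real.sqrt L := Real.div_sqrt
      calc -L * (Pm / Real.sqrt L) = -(L / Real.sqrt L) * Pm := by ring
        _ = -(Real.sqrt L) * Pm := by rw [hdiv]
    have hlogn : (0:ℝ) ≤ Real.log n := Real.log_nonneg (by exact_mod_cast hn)
    have hE : -L * (Pm / Real.sqrt L) + (M n : ℝ) * (Real.exp L * (p * a n)) ≤
        -2 * Real.log n := by
      rw [hneg]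
      have hPc : c' * Real.log n ≤ Pm := hlog n
      have hA : (Real.sqrt L / 2) * Pm ≤ (Real.sqrt L - c) * Pm := by nlinarith
      have hB : (Real.sqrt L / 2) * (c' * Real.log n) ≤ (Real.sqrt L / 2) * Pm :=
        mul_le_mul_of_nonneg_left hPc (by positivity)
      have hC : 2 * Real.log n ≤ (Real.sqrt L / 2) * (c' * Real.log n) := by nlinarith
      nlinarith
    have h2 : Real.exp (-2 * Real.log n) = ((n:ℝ) * n)⁻¹ := by
      rw [show (-2:ℝ) * Real.log n = -(Real.log n + Real.log n) by ring,
        Real.exp_neg, Real.exp_add, Real.exp_log hn']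
    calc (n : ℝ) * ((μ n) {ω | p * a n * m n / Real.sqrt L < ∑ j, W n j ω}).toReal
        ≤ (n : ℝ) * (Real.exp (-L * (Pm / Real.sqrt L)) *
            Real.exp ((M n : ℝ) * (Real.exp L * (p * a n)))) := by
          exact mul_le_mul_of_nonneg_left htail (by positivity)
      _ = (n : ℝ) * Real.exp (-L * (Pm / Real.sqrt L) +
            (M n : ℝ) * (Real.exp L * (p * a n))) := by rw [← Real.exp_add]
      _ ≤ (n : ℝ) * Real.exp (-2 * Real.log n) :=
          mul_le_mul_of_nonneg_left (Real.exp_le_exp.2 hE) (by positivity)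
      _ = (n : ℝ)⁻¹ := by
          rw [h2, mul_inv]
          field_simp
  · exact tendsto_inv_atTop_nhds_zero_nat


end HSBM
end
end
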